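/- There exists a one-way deterministic one-counter automaton (1D1CA) over the alphabet {a,b} that recognizes the complement of EQ* within {a,b}*, i.e., it accepts exactly those strings in {a,b}* that do not belong to EQ*. -/

import Mathlib

/-- Input symbols extended with the left (`cent`) and right (`dollar`) end-markers. -/
inductive TSym (α : Type) : Type
  | cent : TSym α
  | letter : α → TSym α
  | dollar : TSym α

/-- The tape content `¢ w $` for an input word `w`. -/
def tagged {α : Type} (w : List α) : List (TSym α) :=
  TSym.cent :: (w.map TSym.letter ++ [TSym.dollar])

/-- A one-way deterministic one-counter automaton. -/
structure OneD1CA (α : Type) where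
  Q : Type
  [fintypeQ : Fintype Q]
  [decQ : DecidableEq Q]
  q0 : Q
  acc : Set Q
  m : ℕ
  δ : Q → TSym α → Bool → Q × ℤ
  bound : ∀ q σ z, |(δ q σ z).2| ≤ (m : ℤ)

attribute [instance] OneD1CA.fintypeQ OneD1CA.decQ

namespace OneD1CA

variable {α : Type} (M : OneD1CA α)

/-- One computation step on a configuration (state, counter value). -/
def step (p : M.Q × ℤ) (σ : TSym α) : M.Q × ℤ :=
  ((M.δ p.1 σ (decide (p.2 = 0))).1, p.2 + (M.δ p.1 σ (decide (p.2 = 0))).2)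

/-- Configuration reached from the initial configuration after reading a list of tape symbols. -/
def confAfter (l : List (TSym α)) : M.Q × ℤ :=
  l.foldl M.step (M.q0, 0)

/-- The automaton accepts `w` iff the state after reading `¢ w $` is accepting. -/
def accepts (w : List α) : Prop :=
  (M.confAfter (tagged w)).1 ∈ M.acc

/-- The automaton recognizes the language `L` if it accepts exactly the members of `L`. -/
def recognizes (L : Set (List α)) : Prop :=
  ∀ w : List α, M.accepts w ↔ w ∈ L

end OneD1CA

/-- The alphabet `{a, b}`. -/
inductive Γ2 : Type
  | a : Γ2
  | b : Γ2
deriving DecidableEq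

/-- The language `EQ = { a^n b^n : n > 0 }`. -/
def EQ : Language Γ2 :=
  {w | ∃ n : ℕ, 0 < n ∧ w = List.replicate n Γ2.a ++ List.replicate n Γ2.b}

/-- The Kleene closure `EQ*`. -/
def EQstar : Language Γ2 := KStar.kstar EQ

/-- States of our automaton. -/
inductive St : Type
  | start | ra | rb | qAcc | qRej
deriving DecidableEq

instance : Fintype St where
  elems := {.start, .ra, .rb, .qAcc, .qRej}
  complete := fun x => by cases x <;> simp

/-- Transition function. -/
def caTrans : St → TSym Γ2 → Bool → St × ℤ
  | .start, .cent, _ => (.start, 0)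
  | .start, .letter .a, _ => (.ra, 1)
  | .start, .dollar, _ => (.qAcc, 0)
  | .ra, .letter .a, _ => (.ra, 1)
  | .ra, .letter .b, _ => (.rb, -1)
  | .rb, .letter .a, true => (.ra, 1)
  | .rb, .letter .b, false => (.rb, -1)
  | .rb, .dollar, true => (.qAcc, 0)
  | _, _, _ => (.qRej, 0)

/-- The automaton. -/
@[reducible] def M : OneD1CA Γ2 where
  Q := St
  q0 := .start
  acc := {St.qRej}
  m := 1
  δ := caTrans
  bound := by
    intro q σ z
    rcases q <;> rcases σ with _ | (_ | _) | _ <;> rcases z <;> decide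

/-- Configuration after reading just the letters of `w` (after the cent). -/
def run (w : List Γ2) : St × ℤ :=
  (w.map TSym.letter).foldl M.step (St.start, 0)

lemma step_eq (p : St × ℤ) (σ : TSym Γ2) :
    M.step p σ = ((caTrans p.1 σ (decide (p.2 = 0))).1,
      p.2 + (caTrans p.1 σ (decide (p.2 = 0))).2) := rfl

lemma run_append (u v : List Γ2) :
    run (u ++ v) = (v.map TSym.letter).foldl M.step (run u) := by
  simp [run, List.foldl_append]

lemma repA (j : ℕ) (k : ℤ) :
    ((List.replicate j Γ2.a).map TSym.letter).foldl M.step (St.ra, k) = (St.ra, k + j) := by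
  induction j generalizing k with
  | zero => simp
  | succ j ih =>
    rw [List.replicate_succ]
    simp only [List.map_cons, List.foldl_cons]
    rw [step_eq]
    have : caTrans St.ra (TSym.letter Γ2.a) (decide (k = 0)) = (St.ra, 1) := by
      rcases (decide (k = 0)) <;> rfl
    rw [this, ih]
    simp; push_cast; ring

lemma repB (j k : ℕ) (h : j ≤ k) :
    ((List.replicate j Γ2.b).map TSym.letter).foldl M.step (St.rb, (k : ℤ)) =
      (St.rb, (k : ℤ) - j) := by
  induction j generalizing k with
  | zero => simp
  | succ j ih =>
    obtain ⟨k, rfl⟩ : ∃ k', k = k' + 1 := ⟨k - 1, by omega⟩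
    rw [List.replicate_succ]
    simp only [List.map_cons, List.foldl_cons]
    rw [step_eq]
    have hz : (decide (((k : ℤ) + 1) = 0)) = false := by
      simp; omega
    have : ((k : ℤ) + 1 : ℤ) = ((k + 1 : ℕ) : ℤ) := by push_cast; ring
    rw [show (((k + 1 : ℕ) : ℤ)) = (k : ℤ) + 1 by push_cast; ring] at *
    rw [hz]
    show ((St.rb, (k:ℤ) + 1 + (-1)) : St × ℤ) |> fun p =>
      ((List.replicate j Γ2.b).map TSym.letter).foldl M.step p = (St.rb, (k:ℤ) + 1 - (j+1)) 
    simp only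
    have h2 : (k : ℤ) + 1 + (-1) = (k : ℤ) := by ring
    rw [h2, ih k (by omega)]
    congr 1
    push_cast; ring

/-- Reading a block `a^n b^n` from `(start,0)` or `(rb,0)` ends in `(rb,0)`. -/
lemma blockRun (c : St) (hc : c = St.start ∨ c = St.rb) (n : ℕ) (hn : 0 < n) :
    (((List.replicate n Γ2.a ++ List.replicate n Γ2.b)).map TSym.letter).foldl M.step (c, 0)
      = (St.rb, 0) := by
  obtain ⟨n, rfl⟩ : ∃ n', n = n' + 1 := ⟨n - 1, by omega⟩
  rw [List.replicate_succ (n := n)]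
  simp only [List.map_append, List.map_cons, List.foldl_append, List.foldl_cons]
  have h1 : M.step (c, 0) (TSym.letter Γ2.a) = (St.ra, 1) := by
    rcases hc with rfl | rfl <;> rfl
  rw [h1, repA]
  have h2 : ((1 : ℤ) + n) = ((n + 1 : ℕ) : ℤ) := by push_cast; ring
  -- now read n+1 b's from (ra, n+1)
  rw [List.replicate_succ (n := n)]
  simp only [List.map_cons, List.foldl_cons]
  have h3 : M.step (St.ra, 1 + (n : ℤ)) (TSym.letter Γ2.b) = (St.rb, (n : ℤ)) := by
    rw [step_eq]
    have : caTrans St.ra (TSym.letter Γ2.b) (decide ((1 + (n:ℤ)) = 0)) = (St.rb, -1) := by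
      rcases (decide ((1 + (n:ℤ)) = 0)) <;> rfl
    rw [this]
    simp
    try ring
  rw [h3, repB n n le_rfl]
  simp

lemma append_mem_EQstar {u v : List Γ2} (hu : u ∈ EQstar) (hv : v ∈ EQ) :
    u ++ v ∈ EQstar := by
  rw [EQstar, Language.mem_kstar] at hu ⊢
  obtain ⟨L, rfl, hL⟩ := hu
  exact ⟨L ++ [v], by simp, by
    intro y hy
    rcases List.mem_append.1 hy with h | h
    · exact hL y h
    · simp at h; subst h; exact hv⟩

/-- The main invariant. -/
def AutInv (w : List Γ2) : Prop :=
  (run w = (St.start, 0) ∧ w = [])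
  ∨ (∃ (u : List Γ2) (k : ℕ), u ∈ EQstar ∧ 0 < k ∧ run w = (St.ra, (k : ℤ)) ∧ w = u ++ List.replicate k Γ2.a)
  ∨ (∃ (u : List Γ2) (n m : ℕ), u ∈ EQstar ∧ 0 < m ∧ m ≤ n ∧ run w = (St.rb, (n : ℤ) - m) ∧
      w = u ++ List.replicate n Γ2.a ++ List.replicate m Γ2.b)
  ∨ (run w).1 = St.qRej

lemma autInv (w : List Γ2) : AutInv w := by
  induction w using List.reverseRecOn with
  | nil => exact Or.inl ⟨rfl, rfl⟩
  | append_singleton w x ih =>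
    have hstep : run (w ++ [x]) = M.step (run w) (TSym.letter x) := by
      rw [run_append]; rfl
    rcases ih with ⟨hr, rfl⟩ | ⟨u, k, hu, hk, hr, rfl⟩ | ⟨u, n, m, hu, hm, hmn, hr, rfl⟩ | hr
    · -- from (start, 0)
      rcases x with _ | _
      · refine Or.inr (Or.inl ⟨[], 1, Language.nil_mem_kstar _, one_pos, ?_, by simp⟩)
        rw [hstep, hr]; rfl
      · refine Or.inr (Or.inr (Or.inr ?_))
        rw [hstep, hr]; rfl
    · -- from (ra, k)
      rcases x with _ | _
      · refine Or.inr (Or.inl ⟨u, k + 1, hu, by omega, ?_, ?_⟩)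
        · rw [hstep, hr, step_eq]
          have : caTrans St.ra (TSym.letter Γ2.a) (decide ((k:ℤ) = 0)) = (St.ra, 1) := by
            rcases (decide ((k:ℤ) = 0)) <;> rfl
          rw [this]; simp; try push_cast; try ring
        · rw [List.replicate_succ' (n := k), ← List.append_assoc]
      · refine Or.inr (Or.inr (Or.inl ⟨u, k, 1, hu, one_pos, hk, ?_, ?_⟩))
        · rw [hstep, hr, step_eq]
          have : caTrans St.ra (TSym.letter Γ2.b) (decide ((k:ℤ) = 0)) = (St.rb, -1) := by
            rcases (decide ((k:ℤ) = 0)) <;> rfl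
          rw [this]; simp; try push_cast; try ring
        · simp
    · -- from (rb, n - m)
      by_cases hnm : n = m
      · subst hnm
        have hz : (decide (((n:ℤ) - n) = 0)) = true := by simp
        rcases x with _ | _
        · refine Or.inr (Or.inl ⟨u ++ (List.replicate n Γ2.a ++ List.replicate n Γ2.b), 1,
            append_mem_EQstar hu ⟨n, hm, rfl⟩, one_pos, ?_, by simp⟩)
          rw [hstep, hr, step_eq, hz]
          show (St.ra, (n:ℤ) - n + 1) = (St.ra, (1:ℤ))
          simp
        · refine Or.inr (Or.inr (Or.inr ?_))
          rw [hstep, hr, step_eq, hz]; rfl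
      · have hz : (decide (((n:ℤ) - m) = 0)) = false := by
          simp only [decide_eq_false_iff_not]; omega
        rcases x with _ | _
        · refine Or.inr (Or.inr (Or.inr ?_))
          rw [hstep, hr, step_eq, hz]; rfl
        · refine Or.inr (Or.inr (Or.inl ⟨u, n, m + 1, hu, by omega, by omega, ?_, ?_⟩))
          · rw [hstep, hr, step_eq, hz]
            show (St.rb, (n:ℤ) - m + (-1)) = (St.rb, (n:ℤ) - ((m+1 : ℕ) : ℤ))
            congr 1; push_cast; ring
          · rw [List.replicate_succ' (n := m), ← List.append_assoc]
    · -- from qRej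
      refine Or.inr (Or.inr (Or.inr ?_))
      rw [hstep, step_eq, hr]
      rcases x <;> cases hb : decide ((run w).2 = 0) <;> rfl

lemma mem_iff (w : List Γ2) :
    w ∈ EQstar ↔ (run w = (St.start, 0) ∨ run w = (St.rb, 0)) := by
  constructor
  · intro hw
    rw [EQstar, Language.mem_kstar] at hw
    obtain ⟨L, rfl, hL⟩ := hw
    induction L using List.reverseRecOn with
    | nil => exact Or.inl rfl
    | append_singleton L B ih =>
      have hB : B ∈ EQ := hL B (by simp)
      obtain ⟨n, hn, rfl⟩ := hB
      have ih' := ih (fun y hy => hL y (by simp [hy]))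
      rw [List.flatten_append, List.flatten, List.flatten, List.append_eq, List.append_nil, run_append]
      rcases ih' with h | h <;> rw [h] <;>
        exact Or.inr (blockRun _ (by simp) n hn)
  · intro h
    rcases autInv w with ⟨hr, rfl⟩ | ⟨u, k, hu, hk, hr, rfl⟩ | ⟨u, n, m, hu, hm, hmn, hr, rfl⟩ | hr
    · exact Language.nil_mem_kstar _
    · rcases h with h | h <;> rw [hr] at h <;> simp_all
    · have hnm : n = m := by
        rcases h with h | h <;> rw [hr] at h <;> simp [Prod.ext_iff] at h
        · omega
      subst hnm
      rw [List.append_assoc]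
      exact append_mem_EQstar hu ⟨n, hm, rfl⟩
    · rcases h with h | h <;> rw [h] at hr <;> simp_all

lemma confAfter_tagged (w : List Γ2) :
    M.confAfter (tagged w) = M.step (run w) TSym.dollar := by
  show ((TSym.cent : TSym Γ2) :: (w.map TSym.letter ++ [TSym.dollar])).foldl M.step
      (St.start, 0) = _
  rw [List.foldl_cons]
  have h0 : M.step ((St.start, 0) : St × ℤ) TSym.cent = (St.start, 0) := rfl
  rw [h0, List.foldl_append]
  rfl

lemma accepts_iff (w : List Γ2) :
    M.accepts w ↔ ¬ (run w = (St.start, 0) ∨ run w = (St.rb, 0)) := by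
  have hx : M.accepts w ↔ (M.step (run w) TSym.dollar).1 = St.qRej := by
    rw [OneD1CA.accepts, confAfter_tagged]
    exact Set.mem_singleton_iff
  rw [hx]
  rcases autInv w with ⟨hr, rfl⟩ | ⟨u, k, hu, hk, hr, rfl⟩ |
      ⟨u, n, m, hu, hm, hmn, hr, rfl⟩ | hr
  · rw [hr]
    have h1 : (M.step ((St.start, 0) : St × ℤ) TSym.dollar).1 = St.qAcc := rfl
    rw [h1]
    simp
  · rw [hr]
    have h1 : (M.step ((St.ra, (k:ℤ)) : St × ℤ) TSym.dollar).1 = St.qRej := by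
      rw [step_eq]; cases hb : decide ((k:ℤ) = 0) <;> rfl
    simp only [h1, true_iff, not_or]
    refine ⟨fun h => ?_, fun h => ?_⟩ <;> simp [Prod.ext_iff] at h
  · rw [hr]
    by_cases hnm : n = m
    · subst hnm
      have hz : (decide (((n:ℤ) - n) = 0)) = true := by simp
      have h1 : (M.step ((St.rb, (n:ℤ) - n) : St × ℤ) TSym.dollar).1 = St.qAcc := by
        rw [step_eq, hz]; rfl
      rw [h1]
      simp [Prod.ext_iff]
    · have hz : (decide (((n:ℤ) - m) = 0)) = false := by
        simp only [decide_eq_false_iff_not]; omega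
      have h1 : (M.step ((St.rb, (n:ℤ) - m) : St × ℤ) TSym.dollar).1 = St.qRej := by
        rw [step_eq, hz]; rfl
      simp only [h1, true_iff, not_or]
      refine ⟨fun h => ?_, fun h => ?_⟩ <;> simp [Prod.ext_iff] at h
      omega
  · have h1 : (M.step (run w) TSym.dollar).1 = St.qRej := by
      rw [step_eq, hr]
      cases hb : decide ((run w).2 = 0) <;> rfl
    simp only [h1, true_iff, not_or]
    refine ⟨fun h => ?_, fun h => ?_⟩ <;> rw [h] at hr <;> simp at hr

/-- some 1D1CA recognizes the complement of `EQ*` within `{a,b}*`. -/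
theorem stmt19 : ∃ M : OneD1CA Γ2, M.recognizes {w : List Γ2 | w ∉ EQstar} := by
  refine ⟨M, fun w => ?_⟩
  rw [accepts_iff]
  simp only [Set.mem_setOf_eq]
  rw [mem_iff]
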